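/- Let p > 2 be prime, r > 1 an integer with r ≡ 1 (mod p-1), and t = v_p(r-1). Then for every λ ∈ F_p, the sum over μ ∈ F_p of ([μ] - [λ])^r is congruent to -[λ]·r·p modulo p^{t+2} in Z_p. -/

import Mathlib

variable {p : ℕ} [hp : Fact p.Prime]

lemma aux_dvd_iff (z : ℤ_[p]) : (p : ℤ_[p]) ∣ z ↔ PadicInt.toZMod z = 0 := by
  rw [← RingHom.mem_ker, PadicInt.ker_toZMod, PadicInt.maximalIdeal_eq_span_p,
    Ideal.mem_span_singleton]

lemma aux_eq_zero (z : ℤ_[p]) (h : ∀ n : ℕ, (p : ℤ_[p]) ^ n ∣ z) : z = 0 := by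
  by_contra hz
  have hnorm : ∀ n : ℕ, ‖z‖ ≤ (p : ℝ) ^ (-(n : ℤ)) := fun n => by
    rw [PadicInt.norm_le_pow_iff_mem_span_pow, Ideal.mem_span_singleton]
    exact h n
  have hppos : (0:ℝ) < (p:ℝ)⁻¹ := by
    have : (0:ℝ) < p := by exact_mod_cast hp.out.pos
    positivity
  have h1 : ((p:ℝ))⁻¹ < 1 := by
    rw [inv_lt_one_iff₀]
    right
    exact_mod_cast hp.out.one_lt
  have hzpos : 0 < ‖z‖ := norm_pos_iff.mpr hz
  obtain ⟨n, hn⟩ := exists_pow_lt_of_lt_one hzpos h1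
  have := hnorm n
  rw [zpow_neg, zpow_natCast, ← inv_pow] at this
  linarith

lemma aux_uniq {x y : ℤ_[p]} (hx : x ^ p = x) (hy : y ^ p = y)
    (h : PadicInt.toZMod x = PadicInt.toZMod y) : x = y := by
  have key : ∀ n : ℕ, (p : ℤ_[p]) ^ (n + 1) ∣ x - y := by
    intro n
    induction n with
    | zero =>
      rw [pow_one, aux_dvd_iff, map_sub, h, sub_self]
    | succ n ih =>
      have hg : (p : ℤ_[p]) ∣ ∑ i ∈ Finset.range p, x ^ i * y ^ (p - 1 - i) := by
        rw [aux_dvd_iff, map_sum]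
        have : ∀ i ∈ Finset.range p,
            PadicInt.toZMod (x ^ i * y ^ (p - 1 - i)) = PadicInt.toZMod y ^ (p - 1) := by
          intro i hi
          rw [map_mul, map_pow, map_pow, h, ← pow_add]
          congr 1
          have := Finset.mem_range.mp hi
          omega
        rw [Finset.sum_congr rfl this, Finset.sum_const, Finset.card_range, nsmul_eq_mul,
          ZMod.natCast_self, zero_mul]
      have hgeom := geom_sum₂_mul x y p
      rw [hx, hy] at hgeom
      calc (p : ℤ_[p]) ^ (n + 2) = (p : ℤ_[p]) * (p : ℤ_[p]) ^ (n + 1) := by ring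
        _ ∣ (∑ i ∈ Finset.range p, x ^ i * y ^ (p - 1 - i)) * (x - y) := mul_dvd_mul hg ih
        _ = x - y := hgeom
  have : x - y = 0 := aux_eq_zero _ (fun n => (pow_dvd_pow _ (Nat.le_succ n)).trans (key n))
  exact sub_eq_zero.mp this

lemma aux_three_pow (v : ℕ) (hv : 1 ≤ v) : v + 2 ≤ 3 ^ v := by
  induction v with
  | zero => omega
  | succ n ih =>
    rcases Nat.eq_zero_or_pos n with h | h
    · subst h; norm_num
    · have := ih h
      have : 3 ^ (n + 1) = 3 * 3 ^ n := by ring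
      omega

lemma aux_choose_dvd (hp3 : 2 < p) (m j : ℕ) (hm : m ≠ 0) (hj : 2 ≤ j) :
    p ^ (padicValNat p m + 2) ∣ m.choose j * p ^ j := by
  rcases lt_or_ge m j with h | hjm
  · rw [Nat.choose_eq_zero_of_lt h]; simp
  have hc0 : m.choose j ≠ 0 := (Nat.choose_pos hjm).ne'
  -- step 1 : padicValNat p m ≤ padicValNat p (m.choose j) + padicValNat p j
  have hid : m * (m - 1).choose (j - 1) = m.choose j * j := by
    have := Nat.add_one_mul_choose_eq (m - 1) (j - 1)
    have h1 : m - 1 + 1 = m := by omega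
    have h2 : j - 1 + 1 = j := by omega
    rwa [h1, h2] at this
  have hval : padicValNat p m + padicValNat p ((m - 1).choose (j - 1)) =
      padicValNat p (m.choose j) + padicValNat p j := by
    have hc1 : (m - 1).choose (j - 1) ≠ 0 := (Nat.choose_pos (by omega)).ne'
    rw [← padicValNat.mul hm hc1, ← padicValNat.mul hc0 (by omega : j ≠ 0), hid]
  have hstep1 : padicValNat p m ≤ padicValNat p (m.choose j) + padicValNat p j := by omega
  -- step 2 : padicValNat p j ≤ j - 2
  have hstep2 : padicValNat p j + 2 ≤ j := by
    set v := padicValNat p j with hv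
    rcases Nat.eq_zero_or_pos v with h0 | h0
    · omega
    · have hdvd : p ^ v ∣ j := pow_padicValNat_dvd
      have hle : p ^ v ≤ j := Nat.le_of_dvd (by omega) hdvd
      have h3 : 3 ^ v ≤ p ^ v := Nat.pow_le_pow_left (by omega) v
      have := aux_three_pow v h0
      omega
  -- conclude
  calc p ^ (padicValNat p m + 2)
      ∣ p ^ (padicValNat p (m.choose j) + j) := pow_dvd_pow p (by omega)
    _ = p ^ padicValNat p (m.choose j) * p ^ j := pow_add p _ _
    _ ∣ m.choose j * p ^ j := mul_dvd_mul_right pow_padicValNat_dvd _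

lemma aux_binom (t m : ℕ) (hm : m ≠ 0) (hp3 : 2 < p) (ht : t = padicValNat p m) (β : ℤ_[p]) :
    (p : ℤ_[p]) ^ (t + 2) ∣ (1 + (p : ℤ_[p]) * β) ^ m - 1 - m * ((p : ℤ_[p]) * β) := by
  have hexp := add_pow ((p : ℤ_[p]) * β) 1 m
  simp only [one_pow, mul_one] at hexp
  rw [add_comm ((p : ℤ_[p]) * β) 1] at hexp
  obtain ⟨n, hn⟩ : ∃ n, m = n + 1 := ⟨m - 1, by omega⟩
  suffices h : (1 + (p : ℤ_[p]) * β) ^ m - 1 - m * ((p : ℤ_[p]) * β)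
      = ∑ i ∈ Finset.range n, ((p : ℤ_[p]) * β) ^ (i + 2) * (m.choose (i + 2) : ℤ_[p]) by
    rw [h]
    apply Finset.dvd_sum
    intro i _
    have hdvd := aux_choose_dvd hp3 m (i + 2) hm (by omega)
    have hcd : ((p : ℤ_[p])) ^ (t + 2) ∣ ((m.choose (i + 2) * p ^ (i + 2) : ℕ) : ℤ_[p]) := by
      rw [ht]
      exact_mod_cast (Nat.cast_dvd_cast hdvd :
        ((p ^ (padicValNat p m + 2) : ℕ) : ℤ_[p]) ∣ ((m.choose (i + 2) * p ^ (i + 2) : ℕ) : ℤ_[p]))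
    have heq : ((p : ℤ_[p]) * β) ^ (i + 2) * (m.choose (i + 2) : ℤ_[p])
        = ((m.choose (i + 2) * p ^ (i + 2) : ℕ) : ℤ_[p]) * β ^ (i + 2) := by push_cast; ring
    rw [heq]
    exact hcd.mul_right _
  rw [hexp, hn, Finset.sum_range_succ', Finset.sum_range_succ']
  simp only [pow_zero, pow_one, Nat.choose_zero_right, Nat.choose_one_right, Nat.cast_one,
    mul_one, Nat.cast_add, Nat.cast_one]
  rw [Nat.choose_one_right]
  simp only [show ∀ x : ℕ, x + 1 + 1 = x + 2 from fun x => rfl]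
  push_cast
  ring

/-- Corollary 2.5(1): for all λ ∈ F_p, Σ_{μ ∈ F_p} ([μ] - [λ])^r ≡ -[λ]·r·p
    (mod p^{t+2}) in ℤ_p. -/
theorem stmt_9 (p : ℕ) [Fact p.Prime] (hp : 2 < p) (r : ℕ) (hr : 1 < r)
    (hcong : (p - 1) ∣ (r - 1)) (t : ℕ) (ht : t = padicValNat p (r - 1))
    (T : ZMod p → ℤ_[p]) (hT1 : ∀ μ, T μ ^ p = T μ)
    (hT2 : ∀ μ, PadicInt.toZMod (T μ) = μ) (lam : ZMod p) :
    (p : ℤ_[p]) ^ (t + 2) ∣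
      (∑ μ : ZMod p, (T μ - T lam) ^ r) - (-(T lam) * (r : ℤ_[p]) * p) := by
  have hpp : p.Prime := Fact.out
  obtain ⟨m, hm⟩ := hcong
  have hm0 : m ≠ 0 := by rintro rfl; omega
  have hr1 : r = (p - 1) * m + 1 := by omega
  have hnd : ¬ p ∣ (p - 1) := by
    intro h; have := Nat.le_of_dvd (by omega) h; omega
  have ht' : t = padicValNat p m := by
    rw [ht, hm, padicValNat.mul (by omega) hm0,
      padicValNat.eq_zero_of_not_dvd hnd, zero_add]
  -- Teichmüller facts
  have hT0 : T 0 = 0 :=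
    aux_uniq (hT1 0) (by rw [zero_pow (by omega : p ≠ 0)]) (by rw [hT2, map_zero])
  have hTmul : ∀ a b : ZMod p, T (a * b) = T a * T b := fun a b =>
    aux_uniq (hT1 _) (by rw [mul_pow, hT1, hT1]) (by rw [hT2, map_mul, hT2, hT2])
  have hTne : ∀ μ : ZMod p, μ ≠ 0 → T μ ≠ 0 := fun μ h h0 =>
    h (by rw [← hT2 μ, h0, map_zero])
  -- generator of the unit group
  obtain ⟨g, hg⟩ := IsCyclic.exists_generator (α := (ZMod p)ˣ)
  have hord : orderOf g = p - 1 := by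
    rw [orderOf_eq_card_of_forall_mem_zpowers hg, Nat.card_eq_fintype_card, ZMod.card_units]
  -- power sums vanish in middle range
  have hSk : ∀ k : ℕ, 1 ≤ k → k ≤ p - 2 → ∑ μ : ZMod p, T μ ^ k = 0 := by
    intro k hk1 hk2
    set a : ZMod p := (g : ZMod p) with ha
    have ha0 : a ≠ 0 := g.ne_zero
    have hak : a ^ k ≠ 1 := by
      intro h
      have hgk : g ^ k = 1 := Units.ext (by rw [Units.val_pow_eq_pow_val, ← ha, h, Units.val_one])
      exact pow_ne_one_of_lt_orderOf (by omega) (by omega) hgk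
    have hb : ∑ μ : ZMod p, T (a * μ) ^ k = ∑ μ : ZMod p, T μ ^ k :=
      Fintype.sum_equiv (Equiv.mulLeft₀ a ha0) _ _ (fun μ => rfl)
    have hb2 : ∑ μ : ZMod p, T (a * μ) ^ k = T a ^ k * ∑ μ : ZMod p, T μ ^ k := by
      simp only [hTmul, mul_pow]; rw [← Finset.mul_sum]
    have hfact : (T a ^ k - 1) * ∑ μ : ZMod p, T μ ^ k = 0 := by
      rw [sub_mul, one_mul, ← hb2, hb, sub_self]
    rcases mul_eq_zero.mp hfact with h | h
    · exact absurd (by rw [← hT2 a, ← map_pow, sub_eq_zero.mp h, map_one]) hak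
    · exact h
  have hS1 : ∑ μ : ZMod p, T μ = 0 := by
    have := hSk 1 le_rfl (by omega)
    simpa using this
  have hSp : ∑ μ : ZMod p, T μ ^ p = 0 := by simp only [hT1]; exact hS1
  have hS0 : ∑ μ : ZMod p, T μ ^ 0 = (p : ℤ_[p]) := by
    simp [Finset.card_univ, ZMod.card]
  have hSp1 : ∑ μ : ZMod p, T μ ^ (p - 1) = (p : ℤ_[p]) - 1 := by
    have hTunit : ∀ μ : ZMod p, μ ≠ 0 → T μ ^ (p - 1) = 1 := by
      intro μ h
      have h1 : T μ ^ (p - 1) * T μ = 1 * T μ := by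
        rw [← pow_succ, one_mul]
        have hp' : p - 1 + 1 = p := by omega
        rw [hp', hT1]
      exact mul_right_cancel₀ (hTne μ h) h1
    have hsplit : ∑ μ ∈ Finset.univ.erase (0 : ZMod p), T μ ^ (p-1) + T 0 ^ (p-1)
        = ∑ μ : ZMod p, T μ ^ (p - 1) := Finset.sum_erase_add _ _ (Finset.mem_univ 0)
    rw [← hsplit, hT0, zero_pow (by omega : p - 1 ≠ 0), add_zero,
      Finset.sum_congr rfl (fun μ hμ => hTunit μ (Finset.ne_of_mem_erase hμ)),
      Finset.sum_const, Finset.card_erase_of_mem (Finset.mem_univ 0), Finset.card_univ,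
      ZMod.card, nsmul_eq_mul, mul_one, Nat.cast_sub (by omega : 1 ≤ p), Nat.cast_one]
  have hsum_x : ∑ μ : ZMod p, (T μ - T lam) = -((p:ℤ_[p]) * T lam) := by
    rw [Finset.sum_sub_distrib, hS1, Finset.sum_const, Finset.card_univ, ZMod.card,
      zero_sub, nsmul_eq_mul]
  have hsum_xp : ∑ μ : ZMod p, (T μ - T lam) ^ p = -((p:ℤ_[p])^2 * T lam) := by
    have hexp : ∀ μ : ZMod p, (T μ - T lam) ^ p
        = ∑ k ∈ Finset.range (p+1), T μ ^ k * (-T lam)^(p-k) * (p.choose k : ℤ_[p]) := by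
      intro μ; rw [sub_eq_add_neg, add_pow]
    rw [Finset.sum_congr rfl (fun μ _ => hexp μ), Finset.sum_comm]
    have hpull : ∀ k ∈ Finset.range (p+1),
        ∑ μ : ZMod p, T μ ^ k * (-T lam)^(p-k) * (p.choose k : ℤ_[p])
        = (∑ μ : ZMod p, T μ ^ k) * ((-T lam)^(p-k) * (p.choose k : ℤ_[p])) := by
      intro k _
      rw [Finset.sum_mul]
      exact Finset.sum_congr rfl fun μ _ => by ring
    rw [Finset.sum_congr rfl hpull]
    have hsubset : ({0, p-1} : Finset ℕ) ⊆ Finset.range (p+1) := by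
      intro k hk
      simp only [Finset.mem_insert, Finset.mem_singleton] at hk
      rcases hk with rfl | rfl <;> · simp only [Finset.mem_range]; omega
    have hzero : ∀ k ∈ Finset.range (p+1), k ∉ ({0, p-1} : Finset ℕ) →
        (∑ μ : ZMod p, T μ ^ k) * ((-T lam)^(p-k) * (p.choose k : ℤ_[p])) = 0 := by
      intro k hk hns
      simp only [Finset.mem_insert, Finset.mem_singleton, not_or] at hns
      have hkr := Finset.mem_range.mp hk
      rcases eq_or_ne k p with rfl | hkp
      · rw [hSp, zero_mul]
      · rw [hSk k (by omega) (by omega), zero_mul]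
    rw [← Finset.sum_subset hsubset hzero]
    have h01 : (0 : ℕ) ∉ ({p-1} : Finset ℕ) := by
      simp only [Finset.mem_singleton]; omega
    rw [Finset.sum_insert h01, Finset.sum_singleton, hS0, hSp1]
    have hcp : (p.choose (p-1) : ℤ_[p]) = (p : ℤ_[p]) := by
      have : p.choose (p - 1) = p := by
        rw [Nat.choose_symm (by omega : 1 ≤ p), Nat.choose_one_right]
      rw [this]
    have hc0 : (p.choose 0 : ℤ_[p]) = 1 := by norm_num
    have hsub1 : p - (p-1) = 1 := by omega
    have hsub0 : p - 0 = p := by omega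
    rw [hsub1, hsub0, hcp, hc0, pow_one]
    have hneg : (-T lam) ^ p = -(T lam) := by
      rw [Odd.neg_pow (hpp.odd_of_ne_two (by omega)), hT1]
    rw [hneg]
    ring
  -- key divisibility for each μ
  have key : ∀ μ : ZMod p, (p:ℤ_[p]) ^ (t+2) ∣
      ((T μ - T lam)^r - (T μ - T lam) - m * ((T μ - T lam)^p - (T μ - T lam))) := by
    intro μ
    rcases eq_or_ne μ lam with rfl | hμ
    · simp [zero_pow (by omega : r ≠ 0), zero_pow (by omega : p ≠ 0)]
    · have hdvd1 : (p:ℤ_[p]) ∣ (T μ - T lam)^(p-1) - 1 := by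
        rw [aux_dvd_iff, map_sub, map_pow, map_one, map_sub, hT2, hT2,
          ZMod.pow_card_sub_one_eq_one (sub_ne_zero.mpr hμ), sub_self]
      obtain ⟨β, hβ⟩ := hdvd1
      have hβ' : (T μ - T lam)^(p-1) = 1 + (p:ℤ_[p]) * β := by linear_combination hβ
      have hxr : (T μ - T lam)^r = (T μ - T lam) * (1 + (p:ℤ_[p]) * β)^m := by
        conv_lhs => rw [hr1]
        rw [pow_succ, pow_mul, hβ']
        ring
      have hxp : (T μ - T lam)^p - (T μ - T lam) = (T μ - T lam) * ((p:ℤ_[p]) * β) := by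
        have hps : (T μ - T lam)^p = (T μ - T lam)^(p-1) * (T μ - T lam) := by
          rw [← pow_succ]
          congr 1
          omega
        rw [hps, hβ']
        ring
      have hbin := aux_binom t m hm0 hp ht' β
      have hfin : (T μ - T lam)^r - (T μ - T lam) - m * ((T μ - T lam)^p - (T μ - T lam))
          = ((1 + (p:ℤ_[p]) * β)^m - 1 - m * ((p:ℤ_[p]) * β)) * (T μ - T lam) := by
        rw [hxr, hxp]; ring
      rw [hfin]
      exact hbin.mul_right _
  have hdvd : (p:ℤ_[p]) ^ (t+2) ∣ ∑ μ : ZMod p,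
      ((T μ - T lam)^r - (T μ - T lam) - m * ((T μ - T lam)^p - (T μ - T lam))) :=
    Finset.dvd_sum (fun μ _ => key μ)
  have hfinal : (∑ μ : ZMod p, (T μ - T lam) ^ r) - (-(T lam) * (r : ℤ_[p]) * p)
      = ∑ μ : ZMod p,
        ((T μ - T lam)^r - (T μ - T lam) - m * ((T μ - T lam)^p - (T μ - T lam))) := by
    have hrc : (r : ℤ_[p]) = (m : ℤ_[p]) * ((p:ℤ_[p]) - 1) + 1 := by
      rw [hr1]
      push_cast [Nat.cast_sub (by omega : 1 ≤ p)]
      ring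
    simp only [Finset.sum_sub_distrib, ← Finset.mul_sum, hS1, hsum_xp, Finset.sum_const,
      Finset.card_univ, ZMod.card, nsmul_eq_mul]
    rw [hrc]
    ring
  rw [hfinal]
  exact hdvd
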